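/- Let X and Y be metric spaces such that X is Gromov hyperbolic, and let f : Y → X be a quasi-isometry. Then Y is Gromov hyperbolic. -/

import Mathlib

open Set

/-- `g` parametrizes a geodesic from `x` to `y` (on the interval `[0, dist x y]`). -/
def IsGeodesic {X : Type*} [MetricSpace X] (x y : X) (g : ℝ → X) : Prop :=
  g 0 = x ∧ g (dist x y) = y ∧
    ∀ s ∈ Icc (0:ℝ) (dist x y), ∀ t ∈ Icc (0:ℝ) (dist x y), dist (g s) (g t) = |s - t|

/-- A geodesic metric space: any two points are joined by a geodesic. -/
def GeodesicSpace (X : Type*) [MetricSpace X] : Prop :=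
  ∀ x y : X, ∃ g : ℝ → X, IsGeodesic x y g

/-- All geodesic triangles of `X` are `δ`-slim. -/
def SlimTriangles (X : Type*) [MetricSpace X] (δ : ℝ) : Prop :=
  ∀ x y z : X, ∀ g₁ g₂ g₃ : ℝ → X,
    IsGeodesic x y g₁ → IsGeodesic y z g₂ → IsGeodesic x z g₃ →
    ∀ p ∈ g₃ '' Icc (0:ℝ) (dist x z),
      ∃ q ∈ g₁ '' Icc (0:ℝ) (dist x y) ∪ g₂ '' Icc (0:ℝ) (dist y z), dist p q ≤ δ


open Metric

lemma sq_le_two_pow : ∀ m : ℕ, 4 ≤ m → m ^ 2 ≤ 2 ^ m := by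
  intro m hm
  induction m with
  | zero => omega
  | succ n ih =>
    rcases Nat.lt_or_ge n 4 with h | h
    · interval_cases n <;> simp_all <;> norm_num
    · have h1 := ih (by omega)
      have h2 : 2 * n + 1 ≤ n ^ 2 := by nlinarith
      have : (n+1)^2 = n^2 + (2*n+1) := by ring
      calc (n+1)^2 = n^2 + (2*n+1) := by ring
        _ ≤ 2^n + 2^n := by omega
        _ = 2^(n+1) := by ring
lemma ext_bound (a b γ : ℝ) (ha : 0 ≤ a) (hb : 0 ≤ b) :
    ∃ D, 0 ≤ D ∧ ∀ R, 0 ≤ R → (R - γ)^2 ≤ a*R + b → R ≤ D := by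
  refine ⟨|γ| + a + b + a*|γ| + 1, by positivity, fun R hR hq => ?_⟩
  by_contra h
  push_neg at h
  have hab : (0:ℝ) ≤ a * |γ| := mul_nonneg ha (abs_nonneg γ)
  set u : ℝ := R - |γ| with hu
  have h1 : a + b + a*|γ| + 1 < u := by linarith
  have h1' : (1:ℝ) ≤ u := by linarith
  have h2 : u ≤ R - γ := by linarith [le_abs_self γ]
  have h3 : u^2 ≤ (R - γ)^2 := by nlinarith
  have h4 : u * (a + b + a*|γ| + 1) < u^2 := by nlinarith
  have h5 : a*R + b ≤ u * (a + b + a*|γ| + 1) := by nlinarith [le_abs_self γ, neg_abs_le γ]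
  linarith


lemma seg_mem_Icc : ∀ {T a' b' : ℝ}, a' ∈ Set.Icc (0:ℝ) T → b' ∈ Set.Icc (0:ℝ) T →
    ∀ {lam : ℝ}, 0 ≤ lam → lam ≤ 1 → a' + lam * (b' - a') ∈ Set.Icc (0:ℝ) T := by
  intro T a' b' ha hb lam h0 h1
  rcases le_total a' b' with hle | hle
  · have e1 : (0:ℝ) ≤ lam * (b' - a') := mul_nonneg h0 (by linarith)
    have e2 : lam * (b' - a') ≤ b' - a' := by nlinarith
    exact ⟨by linarith [ha.1], by linarith [hb.2]⟩
  · have e1 : lam * (b' - a') ≤ 0 := mul_nonpos_of_nonneg_of_nonpos h0 (by linarith)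
    have e2 : a' - b' ≥ lam * (a' - b') := by nlinarith
    exact ⟨by nlinarith [hb.1], by linarith [ha.2]⟩


lemma geodesic_continuousOn {X : Type*} [MetricSpace X] {x z : X} {G : ℝ → X}
    (hG : IsGeodesic x z G) : ContinuousOn G (Icc 0 (dist x z)) := by
  refine LipschitzOnWith.continuousOn (K := 1) ?_
  refine LipschitzOnWith.of_dist_le_mul fun s hs t ht => ?_
  rw [hG.2.2 s hs t ht]
  rw [NNReal.coe_one, one_mul, Real.dist_eq]

lemma sub_geodesic {X : Type*} [MetricSpace X] {x z : X} {G : ℝ → X}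
    (hG : IsGeodesic x z G) {a b : ℝ} (h0 : 0 ≤ a) (hab : a ≤ b) (hb : b ≤ dist x z) :
    dist (G a) (G b) = b - a ∧ IsGeodesic (G a) (G b) (fun s => G (a + s)) := by
  have hmem : ∀ s, a ≤ s → s ≤ b → s ∈ Icc (0:ℝ) (dist x z) :=
    fun s h1 h2 => ⟨le_trans h0 h1, le_trans h2 hb⟩
  have hd : dist (G a) (G b) = b - a := by
    rw [hG.2.2 a (hmem a le_rfl hab) b (hmem b hab le_rfl), abs_of_nonpos (by linarith)]
    ring
  refine ⟨hd, ?_, ?_, ?_⟩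
  · simp
  · rw [hd]; congr 1; ring
  · intro s hs t ht
    rw [hd] at hs ht
    show dist (G (a+s)) (G (a+t)) = |s - t|
    rw [hG.2.2 (a+s) (hmem _ (by linarith [hs.1]) (by linarith [hs.2])) (a+t)
      (hmem _ (by linarith [ht.1]) (by linarith [ht.2]))]
    congr 1
    ring


lemma geodesic_dist_endpoints {X : Type*} [MetricSpace X] {u v : X} {σ : ℝ → X}
    (h : IsGeodesic u v σ) {s : ℝ} (hs : s ∈ Icc (0:ℝ) (dist u v)) :
    dist u (σ s) = s ∧ dist (σ s) v = dist u v - s := by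
  constructor
  · conv_lhs => rw [← h.1]
    rw [h.2.2 0 ⟨le_rfl, dist_nonneg⟩ s hs, abs_of_nonpos (by linarith [hs.1])]
    ring
  · conv_lhs => rw [show v = σ (dist u v) from h.2.1.symm]
    rw [h.2.2 s hs (dist u v) ⟨dist_nonneg, le_rfl⟩, abs_of_nonpos (by linarith [hs.2])]
    ring


/-- Lemma A: a point on a geodesic is within `δ*n + C` of a discrete path with
`≤ 2^n` steps of size `≤ C` joining its endpoints. -/
lemma lemA {X : Type*} [MetricSpace X] (hgX : GeodesicSpace X) {δ : ℝ}
    (hslim : SlimTriangles X δ) (hδ : 0 ≤ δ) (C : ℝ) :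
    ∀ n : ℕ, ∀ (x z : X) (g : ℝ → X), IsGeodesic x z g →
    ∀ (N : ℕ) (p : ℕ → X), 1 ≤ N → N ≤ 2 ^ n → p 0 = x → p N = z →
      (∀ i < N, dist (p i) (p (i + 1)) ≤ C) →
      ∀ t ∈ Icc (0:ℝ) (dist x z), ∃ i ≤ N, dist (g t) (p i) ≤ δ * n + C := by
  intro n
  induction n with
  | zero =>
    intro x z g hg N p hN1 hN2 hp0 hpN hstep t ht
    interval_cases N
    refine ⟨0, by norm_num, ?_⟩
    have h1 : dist x z ≤ C := by
      have := hstep 0 (by norm_num); rwa [hp0, hpN] at this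
    have h2 : dist (g t) x = t := by
      have := hg.2.2 t ht 0 ⟨le_refl 0, dist_nonneg⟩
      rw [hg.1] at this; rw [this]; rw [abs_of_nonneg (by linarith [ht.1])]; ring
    rw [hp0]
    simp only [Nat.cast_zero, mul_zero, zero_add]
    calc dist (g t) x = t := h2
      _ ≤ dist x z := ht.2
      _ ≤ C := h1
  | succ n ih =>
    intro x z g hg N p hN1 hN2 hp0 hpN hstep t ht
    rcases eq_or_lt_of_le hN1 with h1 | h2
    · -- N = 1, same as base case
      refine ⟨0, by omega, ?_⟩
      have h1' : N = 1 := h1.symm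
      subst h1'
      have h1 : dist x z ≤ C := by
        have := hstep 0 (by norm_num); rwa [hp0, hpN] at this
      have h2 : dist (g t) x = t := by
        have := hg.2.2 t ht 0 ⟨le_refl 0, dist_nonneg⟩
        rw [hg.1] at this; rw [this]; rw [abs_of_nonneg (by linarith [ht.1])]; ring
      rw [hp0]
      have : (0:ℝ) ≤ δ * (n+1 : ℕ) := by positivity
      calc dist (g t) x = t := h2
        _ ≤ dist x z := ht.2
        _ ≤ C := h1
        _ ≤ δ * (n+1 : ℕ) + C := by linarith
    · -- N ≥ 2
      set M : ℕ := (N + 1) / 2 with hM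
      have hM1 : 1 ≤ M := by omega
      have hMN : M < N := by omega
      have hM2 : M ≤ 2 ^ n := by
        have : N ≤ 2 ^ (n+1) := hN2
        have : 2 ^ (n+1) = 2 * 2 ^ n := by ring
        omega
      have hNM2 : N - M ≤ 2 ^ n := by
        have : 2 ^ (n+1) = 2 * 2 ^ n := by ring
        omega
      set m := p M with hm
      obtain ⟨h₁, hh₁⟩ := hgX x m
      obtain ⟨h₂, hh₂⟩ := hgX m z
      obtain ⟨q, hq, hqd⟩ := hslim x m z h₁ h₂ g hh₁ hh₂ hg (g t) ⟨t, ht, rfl⟩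
      rcases hq with ⟨s, hs, rfl⟩ | ⟨s, hs, rfl⟩
      · obtain ⟨i, hi, hdi⟩ := ih x m h₁ hh₁ M p hM1 hM2 hp0 rfl
          (fun i hi => hstep i (by omega)) s hs
        refine ⟨i, by omega, ?_⟩
        have : dist (g t) (p i) ≤ dist (g t) (h₁ s) + dist (h₁ s) (p i) := dist_triangle _ _ _
        push_cast
        push_cast at hdi
        linarith
      · obtain ⟨i, hi, hdi⟩ := ih m z h₂ hh₂ (N - M) (fun j => p (M + j)) (by omega) hNM2
          rfl (by show p (M + (N-M)) = z; rw [show M + (N - M) = N from by omega]; exact hpN)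
          (fun i hi => by
            show dist (p (M+i)) (p (M+(i+1))) ≤ C
            rw [show M + (i + 1) = (M + i) + 1 from by omega]
            exact hstep (M + i) (by omega)) s hs
        refine ⟨M + i, by omega, ?_⟩
        have : dist (g t) (p (M+i)) ≤ dist (g t) (h₂ s) + dist (h₂ s) (p (M+i)) := dist_triangle _ _ _
        push_cast
        push_cast at hdi
        linarith


set_option maxHeartbeats 800000 in
lemma dir1 {X Y : Type*} [MetricSpace X] [MetricSpace Y]
    (hgX : GeodesicSpace X) {δ : ℝ} (hslim : SlimTriangles X δ) (hδ : 0 ≤ δ)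
    (f : Y → X) (k c : ℝ) (hk : 1 ≤ k) (hc : 0 ≤ c)
    (hqi₁ : ∀ y y' : Y, (1 / k) * dist y y' - c ≤ dist (f y) (f y') ∧
      dist (f y) (f y') ≤ k * dist y y' + c) :
    ∃ D₀ : ℝ, 0 ≤ D₀ ∧ ∀ (y y' : Y) (gY : ℝ → Y) (G : ℝ → X),
      IsGeodesic y y' gY → IsGeodesic (f y) (f y') G →
      ∀ τ ∈ Icc (0:ℝ) (dist (f y) (f y')),
        ∃ a ∈ Icc (0:ℝ) (dist y y'), dist (G τ) (f (gY a)) ≤ D₀ := by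
  have hk0 : (0:ℝ) < k := by linarith
  set C' : ℝ := k + c with hC'
  have hC1 : 1 ≤ C' := by simp only [hC']; linarith
  set γbig : ℝ := 2 + 4*δ + C' with hγbig
  set γ₀ : ℝ := 1 + C' + δ with hγ₀
  set α : ℝ := 6*k + 2 with hα
  set β : ℝ := 6 + 2*k + k*c with hβ
  have hα0 : 0 ≤ α := by simp only [hα]; linarith
  have hβ0 : 0 ≤ β := by simp only [hβ]; nlinarith
  obtain ⟨Dq, hDq0, hDq⟩ := ext_bound (δ^2*α) (δ^2*β) γ₀ (by positivity) (by positivity)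
  refine ⟨max γbig Dq + 1, by
    have : (0:ℝ) ≤ γbig := by simp only [hγbig]; linarith
    have := le_max_left γbig Dq
    linarith, ?_⟩
  intro y y' gY G hgY hG
  set T : ℝ := dist y y' with hT
  set L : ℝ := dist (f y) (f y') with hL
  have hT0 : 0 ≤ T := dist_nonneg
  have hL0 : 0 ≤ L := dist_nonneg
  set S : Set X := (fun t => f (gY t)) '' Icc (0:ℝ) T with hS
  have hSne : S.Nonempty := ⟨f (gY 0), 0, ⟨le_rfl, hT0⟩, rfl⟩
  have hKcomp : IsCompact (G '' Icc 0 L) :=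
    (isCompact_Icc).image_of_continuousOn (geodesic_continuousOn hG)
  have hKne : (G '' Icc 0 L).Nonempty := ⟨G 0, 0, ⟨le_rfl, hL0⟩, rfl⟩
  obtain ⟨u₀, hu₀K, hmax⟩ := hKcomp.exists_isMaxOn hKne
    ((continuous_infDist_pt S).continuousOn)
  obtain ⟨t₀, ht₀, hu₀⟩ := hu₀K
  set R : ℝ := infDist u₀ S with hRdef
  have hmax' : ∀ t ∈ Icc (0:ℝ) L, infDist (G t) S ≤ R :=
    fun t ht => hmax (mem_image_of_mem _ ht)
  have hR0 : 0 ≤ R := infDist_nonneg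
  suffices hRD : R ≤ max γbig Dq by
    intro τ hτ
    have h2 : infDist (G τ) S < max γbig Dq + 1 := lt_of_le_of_lt (hmax' τ hτ) (by linarith)
    obtain ⟨w, hwS, hw⟩ := (infDist_lt_iff hSne).1 h2
    obtain ⟨a, ha, rfl⟩ := hwS
    exact ⟨a, ha, le_of_lt hw⟩
  by_contra hcon
  push_neg at hcon
  have hγbigR : γbig < R := lt_of_le_of_lt (le_max_left _ _) hcon
  have hDqR : Dq < R := lt_of_le_of_lt (le_max_right _ _) hcon
  have hR3 : 3 ≤ R := by simp only [hγbig] at hγbigR; linarith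
  -- the window around t₀
  set tₗ : ℝ := max 0 (t₀ - 2*R) with htₗdef
  set tᵣ : ℝ := min L (t₀ + 2*R) with htᵣdef
  have htₗ0 : 0 ≤ tₗ := le_max_left _ _
  have htₗt₀ : tₗ ≤ t₀ := max_le ht₀.1 (by linarith)
  have ht₀tᵣ : t₀ ≤ tᵣ := le_min ht₀.2 (by linarith)
  have htᵣL : tᵣ ≤ L := min_le_left _ _
  have htₗL : tₗ ≤ L := le_trans (le_trans htₗt₀ ht₀tᵣ) htᵣL
  have htᵣ0 : 0 ≤ tᵣ := le_trans (le_trans htₗ0 htₗt₀) ht₀tᵣ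
  obtain ⟨hdmm, hsub⟩ := sub_geodesic hG htₗ0 (le_trans htₗt₀ ht₀tᵣ) htᵣL
  have hwidth : tᵣ - tₗ ≤ 4*R := by
    have h1 : t₀ - 2*R ≤ tₗ := le_max_right _ _
    have h2 : tᵣ ≤ t₀ + 2*R := min_le_right _ _
    linarith
  have hdₗeq : dist (G t₀) (G tₗ) = t₀ - tₗ := by
    rw [dist_comm]; exact (sub_geodesic hG htₗ0 htₗt₀ (le_trans ht₀tᵣ htᵣL)).1
  have hdᵣeq : dist (G t₀) (G tᵣ) = tᵣ - t₀ :=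
    (sub_geodesic hG ht₀.1 ht₀tᵣ htᵣL).1
  -- anchors
  have hleft : ∃ a' ∈ Icc (0:ℝ) T, dist (G tₗ) (f (gY a')) ≤ R + 1 ∧
      (2*R ≤ dist (G t₀) (G tₗ) ∨ G tₗ = f (gY a')) := by
    rcases le_or_gt 0 (t₀ - 2*R) with h | h
    · have htₗe : tₗ = t₀ - 2*R := max_eq_right h
      have h2 : infDist (G tₗ) S < R + 1 := lt_of_le_of_lt (hmax' tₗ ⟨htₗ0, htₗL⟩) (by linarith)
      obtain ⟨w, hwS, hw⟩ := (infDist_lt_iff hSne).1 h2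
      obtain ⟨a', ha', rfl⟩ := hwS
      exact ⟨a', ha', le_of_lt hw, Or.inl (by rw [hdₗeq, htₗe]; linarith)⟩
    · have htₗe : tₗ = 0 := max_eq_left (by linarith)
      refine ⟨0, ⟨le_rfl, hT0⟩, ?_, Or.inr ?_⟩
      · rw [htₗe, hG.1, hgY.1]; simp; linarith
      · rw [htₗe, hG.1, hgY.1]
  have hright : ∃ b' ∈ Icc (0:ℝ) T, dist (f (gY b')) (G tᵣ) ≤ R + 1 ∧
      (2*R ≤ dist (G t₀) (G tᵣ) ∨ G tᵣ = f (gY b')) := by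
    rcases le_or_gt (t₀ + 2*R) L with h | h
    · have htᵣe : tᵣ = t₀ + 2*R := min_eq_right h
      have h2 : infDist (G tᵣ) S < R + 1 := lt_of_le_of_lt (hmax' tᵣ ⟨htᵣ0, htᵣL⟩) (by linarith)
      obtain ⟨w, hwS, hw⟩ := (infDist_lt_iff hSne).1 h2
      obtain ⟨b', hb', rfl⟩ := hwS
      exact ⟨b', hb', by rw [dist_comm]; exact le_of_lt hw,
        Or.inl (by rw [hdᵣeq, htᵣe]; linarith)⟩
    · have htᵣe : tᵣ = L := min_eq_left (by linarith)
      have hGL : G tᵣ = f y' := by rw [htᵣe]; exact hG.2.1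
      refine ⟨T, ⟨hT0, le_rfl⟩, ?_, Or.inr ?_⟩
      · rw [hGL, hgY.2.1]; simp; linarith
      · rw [hGL, hgY.2.1]
  obtain ⟨a', ha'T, ha'd, ha'far⟩ := hleft
  obtain ⟨b', hb'T, hb'd, hb'far⟩ := hright
  obtain ⟨σₗ, hσₗ⟩ := hgX (G tₗ) (f (gY a'))
  obtain ⟨σᵣ, hσᵣ⟩ := hgX (f (gY b')) (G tᵣ)
  set dₗ : ℝ := dist (G tₗ) (f (gY a')) with hdₗdef
  set dᵣ : ℝ := dist (f (gY b')) (G tᵣ) with hdᵣdef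
  have hdₗ0 : 0 ≤ dₗ := dist_nonneg
  have hdᵣ0 : 0 ≤ dᵣ := dist_nonneg
  obtain ⟨m₁, hm₁1, hm₁R, hRm₁⟩ : ∃ m : ℕ, 1 ≤ m ∧ (m:ℝ) ≤ R + 2 ∧ R + 1 ≤ (m:ℝ) := by
    refine ⟨⌈R + 1⌉₊, ?_, ?_, Nat.le_ceil _⟩
    · exact Nat.one_le_iff_ne_zero.2 (by
        simp only [ne_eq, Nat.ceil_eq_zero, not_le]; linarith)
    · have := Nat.ceil_lt_add_one (R := ℝ) (by linarith : (0:ℝ) ≤ R + 1)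
      linarith
  obtain ⟨m₂, hm₂1, hm₂b, habm₂⟩ :
      ∃ m : ℕ, 1 ≤ m ∧ (m:ℝ) ≤ |b' - a'| + 2 ∧ |b' - a'| ≤ (m:ℝ) := by
    refine ⟨⌈|b' - a'|⌉₊ + 1, by omega, ?_, ?_⟩
    · have := Nat.ceil_lt_add_one (R := ℝ) (abs_nonneg (b' - a'))
      push_cast
      linarith
    · have := Nat.le_ceil (|b' - a'|)
      push_cast
      linarith
  have hdₗm₁ : dₗ ≤ (m₁:ℝ) := le_trans ha'd hRm₁
  have hdᵣm₁ : dᵣ ≤ (m₁:ℝ) := le_trans hb'd hRm₁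
  have hm₂0 : (0:ℝ) < (m₂:ℝ) := by exact_mod_cast hm₂1
  set N : ℕ := m₁ + m₂ + m₁ with hNdef
  -- the discrete path
  obtain ⟨p, pleft, pmidP, prightP⟩ :
      ∃ p : ℕ → X, (∀ i : ℕ, i ≤ m₁ → p i = σₗ (min (i:ℝ) dₗ)) ∧
        (∀ j : ℕ, 1 ≤ j → j ≤ m₂ →
          p (m₁ + j) = f (gY (a' + ((j:ℝ)/m₂) * (b' - a')))) ∧
        (∀ j : ℕ, 1 ≤ j → j ≤ m₁ → p (m₁ + m₂ + j) = σᵣ (min (j:ℝ) dᵣ)) := by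
    refine ⟨fun i => if i ≤ m₁ then σₗ (min (i:ℝ) dₗ)
      else if i ≤ m₁ + m₂ then f (gY (a' + (((i - m₁ : ℕ):ℝ)/m₂) * (b' - a')))
      else σᵣ (min (((i - (m₁ + m₂) : ℕ)):ℝ) dᵣ), ?_, ?_, ?_⟩
    · intro i hi; simp only [if_pos hi]
    · intro j hj1 hj
      have h1 : ¬ (m₁ + j ≤ m₁) := by omega
      have h2 : m₁ + j ≤ m₁ + m₂ := by omega
      simp only [if_neg h1, if_pos h2, Nat.add_sub_cancel_left]
    · intro j hj1 hj
      have h1 : ¬ (m₁ + m₂ + j ≤ m₁) := by omega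
      have h2 : ¬ (m₁ + m₂ + j ≤ m₁ + m₂) := by omega
      simp only [if_neg h1, if_neg h2, Nat.add_sub_cancel_left]
  -- membership of middle parameters
  have hcj : ∀ j : ℕ, j ≤ m₂ → a' + ((j:ℝ)/m₂) * (b' - a') ∈ Icc (0:ℝ) T := by
    intro j hj
    refine seg_mem_Icc ha'T hb'T (by positivity) ?_
    rw [div_le_one hm₂0]; exact_mod_cast hj
  -- values of p on the three pieces
  have pmid : ∀ j : ℕ, j ≤ m₂ → p (m₁ + j) = f (gY (a' + ((j:ℝ)/m₂) * (b' - a'))) := by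
    intro j hj
    rcases Nat.eq_zero_or_pos j with rfl | hj1
    · have : p (m₁ + 0) = σₗ (min (m₁:ℝ) dₗ) := pleft m₁ le_rfl
      rw [Nat.add_zero] at *
      rw [this, min_eq_right hdₗm₁]
      have := hσₗ.2.1
      rw [← hdₗdef] at this
      rw [this]
      norm_num
    · exact pmidP j hj1 hj
  have pright : ∀ j : ℕ, j ≤ m₁ → p (m₁ + m₂ + j) = σᵣ (min (j:ℝ) dᵣ) := by
    intro j hj
    rcases Nat.eq_zero_or_pos j with rfl | hj1
    · have : p (m₁ + m₂ + 0) = f (gY (a' + ((m₂:ℝ)/m₂) * (b' - a'))) := by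
        rw [Nat.add_zero]; exact pmid m₂ le_rfl
      rw [this, div_self (ne_of_gt hm₂0)]
      rw [show a' + 1 * (b' - a') = b' from by ring]
      rw [show ((0:ℕ):ℝ) = (0:ℝ) from by norm_num, min_eq_left hdᵣ0, hσᵣ.1]
    · exact prightP j hj1 hj
  have p0 : p 0 = G tₗ := by
    rw [pleft 0 (by omega)]
    rw [show ((0:ℕ):ℝ) = (0:ℝ) from by norm_num, min_eq_left hdₗ0, hσₗ.1]
  have pend : p N = G tᵣ := by
    have : p (m₁ + m₂ + m₁) = σᵣ (min (m₁:ℝ) dᵣ) := pright m₁ le_rfl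
    rw [hNdef, this, min_eq_right hdᵣm₁]
    have := hσᵣ.2.1
    rw [← hdᵣdef] at this
    exact this
  -- step bounds
  have hminmemₗ : ∀ i : ℕ, min (i:ℝ) dₗ ∈ Icc (0:ℝ) dₗ :=
    fun i => ⟨le_min (Nat.cast_nonneg i) hdₗ0, min_le_right _ _⟩
  have hminmemᵣ : ∀ i : ℕ, min (i:ℝ) dᵣ ∈ Icc (0:ℝ) dᵣ :=
    fun i => ⟨le_min (Nat.cast_nonneg i) hdᵣ0, min_le_right _ _⟩
  have hminstep : ∀ (i : ℕ) (d : ℝ), |min (i:ℝ) d - min ((i+1:ℕ):ℝ) d| ≤ 1 := by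
    intro i d
    push_cast
    have h1 : min (i:ℝ) d ≤ min ((i:ℝ)+1) d := min_le_min (by linarith) le_rfl
    have h2 : min ((i:ℝ)+1) d ≤ min (i:ℝ) d + 1 := by
      rcases le_total ((i:ℝ)+1) d with h | h
      · rw [min_eq_left h]
        rcases le_total (i:ℝ) d with h' | h'
        · rw [min_eq_left h']
        · rw [min_eq_right h']; linarith
      · rw [min_eq_right h]
        rcases le_total (i:ℝ) d with h' | h'
        · rw [min_eq_left h']; linarith
        · rw [min_eq_right h']; linarith
    rw [abs_le]
    constructor <;> linarith
  have hstep : ∀ i < N, dist (p i) (p (i + 1)) ≤ C' := by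
    intro i hi
    rcases Nat.lt_or_ge i m₁ with h1 | h1
    · -- left connector
      rw [pleft i (by omega), pleft (i+1) (by omega)]
      rw [hσₗ.2.2 _ (hminmemₗ i) _ (hminmemₗ (i+1))]
      exact le_trans (hminstep i dₗ) hC1
    · rcases Nat.lt_or_ge i (m₁ + m₂) with h2 | h2
      · -- middle
        set j : ℕ := i - m₁ with hjdef
        have hij : i = m₁ + j := by omega
        have hij1 : i + 1 = m₁ + (j + 1) := by omega
        have hjm : j < m₂ := by omega
        rw [hij1, hij, pmid j (by omega), pmid (j+1) (by omega)]
        have hu := hcj j (by omega)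
        have hv := hcj (j+1) (by omega)
        have hYdist : dist (gY (a' + ((j:ℝ)/m₂) * (b' - a')))
            (gY (a' + (((j+1:ℕ):ℝ)/m₂) * (b' - a'))) ≤ 1 := by
          rw [hgY.2.2 _ hu _ hv]
          push_cast
          rw [show a' + (j:ℝ)/m₂ * (b' - a') - (a' + ((j:ℝ)+1)/m₂ * (b' - a'))
            = -((b' - a')/m₂) from by field_simp; ring]
          rw [abs_neg, abs_div, abs_of_pos hm₂0]
          rw [div_le_one hm₂0]
          exact habm₂
        calc dist (f (gY (a' + ((j:ℝ)/m₂) * (b' - a'))))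
              (f (gY (a' + (((j+1:ℕ):ℝ)/m₂) * (b' - a'))))
            ≤ k * dist (gY (a' + ((j:ℝ)/m₂) * (b' - a')))
              (gY (a' + (((j+1:ℕ):ℝ)/m₂) * (b' - a'))) + c := (hqi₁ _ _).2
          _ ≤ k * 1 + c := add_le_add (mul_le_mul_of_nonneg_left hYdist (le_of_lt hk0)) le_rfl
          _ = C' := by rw [hC']; ring
      · -- right connector
        set j : ℕ := i - (m₁ + m₂) with hjdef
        have hij : i = m₁ + m₂ + j := by omega
        have hij1 : i + 1 = m₁ + m₂ + (j + 1) := by omega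
        have hjm : j < m₁ := by omega
        rw [hij1, hij, pright j (by omega), pright (j+1) (by omega)]
        rw [hσᵣ.2.2 _ (hminmemᵣ j) _ (hminmemᵣ (j+1))]
        exact le_trans (hminstep j dᵣ) hC1
  -- farness of every path point from G t₀
  have hSfar : ∀ w ∈ S, R ≤ dist (G t₀) w := by
    intro w hw
    rw [hRdef, ← hu₀]
    exact infDist_le_dist_of_mem hw
  have hfar : ∀ i ≤ N, R - 1 ≤ dist (G t₀) (p i) := by
    intro i hiN
    rcases Nat.lt_or_ge i (m₁+1) with h1 | h1
    · -- left connector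
      rw [pleft i (by omega)]
      have hmm := hminmemₗ i
      have hend := geodesic_dist_endpoints hσₗ (s := min (i:ℝ) dₗ) (by rwa [← hdₗdef])
      rcases ha'far with hfar2R | heq
      · have htri : dist (G t₀) (G tₗ) ≤ dist (G t₀) (σₗ (min (i:ℝ) dₗ))
            + dist (G tₗ) (σₗ (min (i:ℝ) dₗ)) := by
          rw [dist_comm (G tₗ) _]; exact dist_triangle _ _ _
        have : dist (G tₗ) (σₗ (min (i:ℝ) dₗ)) = min (i:ℝ) dₗ := hend.1
        have hle : dist (G tₗ) (σₗ (min (i:ℝ) dₗ)) ≤ R + 1 := by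
          rw [this]; exact le_trans (min_le_right _ _) ha'd
        linarith
      · -- G tₗ = f (gY a') : dₗ = 0, so the point is in S
        have hd0 : dₗ = 0 := by rw [hdₗdef, heq, dist_self]
        have : min (i:ℝ) dₗ = 0 := by
          rw [hd0]; exact min_eq_right (Nat.cast_nonneg i)
        rw [this, hσₗ.1, heq]
        have : f (gY a') ∈ S := ⟨a', ha'T, rfl⟩
        linarith [hSfar _ this]
    · rcases Nat.lt_or_ge i (m₁ + m₂) with h2 | h2
      · -- middle: in S
        set j : ℕ := i - m₁ with hjdef
        have hij : i = m₁ + j := by omega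
        rw [hij, pmid j (by omega)]
        have : f (gY (a' + ((j:ℝ)/m₂) * (b' - a'))) ∈ S := ⟨_, hcj j (by omega), rfl⟩
        linarith [hSfar _ this]
      · -- right connector
        set j : ℕ := i - (m₁ + m₂) with hjdef
        have hij : i = m₁ + m₂ + j := by omega
        rw [hij, pright j (by omega)]
        have hmm := hminmemᵣ j
        have hend := geodesic_dist_endpoints hσᵣ (s := min (j:ℝ) dᵣ) (by rwa [← hdᵣdef])
        rcases hb'far with hfar2R | heq
        · have h3 : dist (σᵣ (min (j:ℝ) dᵣ)) (G tᵣ) = dᵣ - min (j:ℝ) dᵣ := hend.2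
          have htri : dist (G t₀) (G tᵣ) ≤ dist (G t₀) (σᵣ (min (j:ℝ) dᵣ))
              + dist (σᵣ (min (j:ℝ) dᵣ)) (G tᵣ) := dist_triangle _ _ _
          have hle : dist (σᵣ (min (j:ℝ) dᵣ)) (G tᵣ) ≤ R + 1 := by
            rw [h3]
            have : 0 ≤ min (j:ℝ) dᵣ := hmm.1
            linarith
          linarith
        · have hd0 : dᵣ = 0 := by rw [hdᵣdef, heq, dist_self]
          have hmin0 : min (j:ℝ) dᵣ = 0 := by
            rw [hd0]; exact min_eq_right (Nat.cast_nonneg j)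
          rw [hmin0, hσᵣ.1]
          have : f (gY b') ∈ S := ⟨b', hb'T, rfl⟩
          linarith [hSfar _ this]
  -- apply Lemma A
  set n : ℕ := Nat.clog 2 N with hndef
  have hN1 : 1 ≤ N := by omega
  have hN2n : N ≤ 2 ^ n := Nat.le_pow_clog (by norm_num) N
  have ht₀mem : t₀ - tₗ ∈ Icc (0:ℝ) (dist (G tₗ) (G tᵣ)) := by
    rw [hdmm]; exact ⟨by linarith, by linarith⟩
  obtain ⟨i, hiN, hdist⟩ := lemA hgX hslim hδ C' n (G tₗ) (G tᵣ) _ hsub N p hN1 hN2n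
    p0 pend hstep (t₀ - tₗ) ht₀mem
  simp only [show tₗ + (t₀ - tₗ) = t₀ from by ring] at hdist
  have hmain : R - 1 ≤ δ * n + C' := le_trans (hfar i hiN) (by
    calc dist (G t₀) (p i) ≤ δ * n + C' := hdist)
  -- bound on N
  have hab' : |b' - a'| ≤ k * (6*R + 2 + c) := by
    have hYd : dist (gY a') (gY b') = |a' - b'| := hgY.2.2 a' ha'T b' hb'T
    have hqi := (hqi₁ (gY a') (gY b')).1
    have hXd : dist (f (gY a')) (f (gY b')) ≤ 6*R + 2 := by
      have htri : dist (f (gY a')) (f (gY b')) ≤ dist (f (gY a')) (G tₗ)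
          + dist (G tₗ) (G tᵣ) + dist (G tᵣ) (f (gY b')) := dist_triangle4 _ _ _ _
      rw [dist_comm (f (gY a')) (G tₗ), dist_comm (G tᵣ) (f (gY b'))] at htri
      rw [hdmm] at htri
      have := dist_comm (f (gY b')) (G tᵣ)
      linarith [ha'd, hb'd, hwidth]
    have h5 : (1/k) * |a' - b'| ≤ 6*R + 2 + c := by
      rw [← hYd]; linarith only [hqi, hXd]
    have h6 := mul_le_mul_of_nonneg_left h5 (le_of_lt hk0)
    have h7 : k * ((1/k) * |a' - b'|) = |a' - b'| := by field_simp
    rw [h7] at h6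
    rw [abs_sub_comm]
    linarith only [h6]
  have hNbound : (N:ℝ) ≤ α*R + β := by
    have : (N:ℝ) = (m₁:ℝ) + (m₂:ℝ) + (m₁:ℝ) := by push_cast [hNdef]; ring
    rw [this]
    have h6 : (m₂:ℝ) ≤ k * (6*R + 2 + c) + 2 := by linarith only [hm₂b, hab']
    simp only [hα, hβ]
    linarith only [hm₁R, h6]
  -- final contradiction
  rcases hδ.eq_or_lt with hδ0 | hδpos
  · rw [← hδ0] at hmain
    simp only [hγbig] at hγbigR
    rw [← hδ0] at hγbigR
    linarith only [hmain, hγbigR]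
  · rcases Nat.lt_or_ge n 5 with hn5 | hn5
    · have hn4 : (n:ℝ) ≤ 4 := by exact_mod_cast Nat.lt_succ_iff.mp hn5
      have hd4 : δ * n ≤ δ * 4 := mul_le_mul_of_nonneg_left hn4 hδ
      simp only [hγbig] at hγbigR
      linarith only [hmain, hγbigR, hd4]
    · set m : ℕ := n - 1 with hmdef
      have hm4 : 4 ≤ m := by omega
      have hNge2 : 2 ≤ N := by omega
      have h2m : 2 ^ m < N := by
        have := Nat.pow_pred_clog_lt_self (b := 2) (by norm_num) hNge2
        simpa [hndef, hmdef] using this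
      have hm2 : (m:ℝ)^2 ≤ (N:ℝ) := by
        have h1 : m^2 ≤ 2^m := sq_le_two_pow m hm4
        have : (m^2 : ℕ) ≤ N := le_of_lt (lt_of_le_of_lt h1 h2m)
        exact_mod_cast this
      have hγ₀R : γ₀ < R := by
        simp only [hγ₀]; simp only [hγbig] at hγbigR; linarith only [hγbigR, hδ]
      have hmge : (R - γ₀)/δ ≤ (m:ℝ) := by
        have hn : (n:ℝ) = (m:ℝ) + 1 := by
          rw [hmdef]; push_cast [Nat.cast_sub (by omega : 1 ≤ n)]; ring
        rw [div_le_iff₀ hδpos]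
        simp only [hγ₀]
        rw [hn] at hmain
        linarith only [hmain]
      have hq : (R - γ₀)^2 ≤ (δ^2*α)*R + δ^2*β := by
        have h0 : 0 ≤ (R - γ₀)/δ := div_nonneg (by linarith only [hγ₀R]) (le_of_lt hδpos)
        have h1 : ((R - γ₀)/δ)^2 ≤ (m:ℝ)^2 := by
          apply pow_le_pow_left₀ h0 hmge
        have h2 : ((R - γ₀)/δ)^2 = (R - γ₀)^2 / δ^2 := by rw [div_pow]
        have h3 : (R - γ₀)^2 / δ^2 ≤ α*R + β := by
          rw [← h2]; exact le_trans h1 (le_trans hm2 hNbound)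
        have h4 : (R - γ₀)^2 ≤ δ^2 * (α*R + β) := by
          rw [div_le_iff₀ (by positivity)] at h3; linarith only [h3]
        linarith only [h4]
      exact absurd (hDq R hR0 hq) (not_le.2 hDqR)


/-- Direction 2 of the Morse lemma, following from direction 1. -/
lemma dir2 {X Y : Type*} [MetricSpace X] [MetricSpace Y]
    (f : Y → X) (k c : ℝ) (hk : 1 ≤ k) (hc : 0 ≤ c)
    (hqi₁ : ∀ y y' : Y, (1 / k) * dist y y' - c ≤ dist (f y) (f y') ∧
      dist (f y) (f y') ≤ k * dist y y' + c)
    (D₀ : ℝ) (hD₀0 : 0 ≤ D₀)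
    (hdir1 : ∀ (y y' : Y) (gY : ℝ → Y) (G : ℝ → X),
      IsGeodesic y y' gY → IsGeodesic (f y) (f y') G →
      ∀ τ ∈ Icc (0:ℝ) (dist (f y) (f y')),
        ∃ a ∈ Icc (0:ℝ) (dist y y'), dist (G τ) (f (gY a)) ≤ D₀) :
    ∀ (y y' : Y) (gY : ℝ → Y) (G : ℝ → X),
      IsGeodesic y y' gY → IsGeodesic (f y) (f y') G →
      ∀ s ∈ Icc (0:ℝ) (dist y y'),
        ∃ τ ∈ Icc (0:ℝ) (dist (f y) (f y')),
          dist (f (gY s)) (G τ) ≤ k*(k*(2*D₀+1+c)) + c + D₀ + 1 := by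
  intro y y' gY G hgY hG s hs
  have hk0 : (0:ℝ) < k := by linarith
  set T : ℝ := dist y y' with hT
  set L : ℝ := dist (f y) (f y') with hL
  have hT0 : 0 ≤ T := dist_nonneg
  have hL0 : 0 ≤ L := dist_nonneg
  set S₁ : Set X := (fun t => f (gY t)) '' Icc (0:ℝ) s with hS₁
  set S₂ : Set X := (fun t => f (gY t)) '' Icc s T with hS₂
  have hS₁ne : S₁.Nonempty := ⟨f (gY s), s, ⟨hs.1, le_rfl⟩, rfl⟩
  have hS₂ne : S₂.Nonempty := ⟨f (gY s), s, ⟨le_rfl, hs.2⟩, rfl⟩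
  set F : ℝ → ℝ := fun τ => infDist (G τ) S₁ - infDist (G τ) S₂ with hF
  have hFcont : ContinuousOn F (Icc 0 L) :=
    (((continuous_infDist_pt S₁).sub (continuous_infDist_pt S₂)).comp_continuousOn
      (geodesic_continuousOn hG))
  have hF0 : F 0 ≤ 0 := by
    have h1 : G 0 ∈ S₁ := by
      rw [hG.1]
      exact ⟨0, ⟨le_rfl, hs.1⟩, by show f (gY 0) = f y; rw [hgY.1]⟩
    have h2 : infDist (G 0) S₁ = 0 := infDist_zero_of_mem h1
    simp only [hF, h2]
    linarith [infDist_nonneg (s := S₂) (x := G 0)]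
  have hFL : 0 ≤ F L := by
    have h1 : G L ∈ S₂ := by
      have : G L = f y' := hG.2.1
      rw [this]
      exact ⟨T, ⟨hs.2, le_rfl⟩, by show f (gY T) = f y'; rw [hgY.2.1]⟩
    have h2 : infDist (G L) S₂ = 0 := infDist_zero_of_mem h1
    simp only [hF, h2]
    linarith [infDist_nonneg (s := S₁) (x := G L)]
  obtain ⟨τ, hτ, hFτ⟩ : ∃ τ ∈ Icc (0:ℝ) L, F τ = 0 := by
    have := intermediate_value_Icc hL0 hFcont
    have h0mem : (0:ℝ) ∈ Icc (F 0) (F L) := ⟨hF0, hFL⟩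
    obtain ⟨τ, hτ, hτ0⟩ := this h0mem
    exact ⟨τ, hτ, hτ0⟩
  refine ⟨τ, hτ, ?_⟩
  obtain ⟨a, haT, had⟩ := hdir1 y y' gY G hgY hG τ hτ
  have key : ∀ b ∈ Icc (0:ℝ) T, dist (G τ) (f (gY b)) ≤ D₀ + 1 →
      ((b ≤ s ∧ s ≤ a) ∨ (a ≤ s ∧ s ≤ b)) →
      dist (f (gY s)) (G τ) ≤ k*(k*(2*D₀+1+c)) + c + D₀ + 1 := by
    intro b hbT hbd hord
    -- distance between the two projections
    have hab : dist (f (gY a)) (f (gY b)) ≤ 2*D₀ + 1 := by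
      have := dist_triangle (f (gY a)) (G τ) (f (gY b))
      rw [dist_comm (f (gY a)) (G τ)] at this
      linarith
    have habY : dist (gY a) (gY b) ≤ k*(2*D₀+1+c) := by
      have hq := (hqi₁ (gY a) (gY b)).1
      have h5 : (1/k) * dist (gY a) (gY b) ≤ 2*D₀ + 1 + c := by linarith
      have h6 := mul_le_mul_of_nonneg_left h5 (le_of_lt hk0)
      have h7 : k * ((1/k) * dist (gY a) (gY b)) = dist (gY a) (gY b) := by field_simp
      rw [h7] at h6
      exact h6
    have hYab : dist (gY a) (gY b) = |a - b| := hgY.2.2 a haT b hbT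
    have hsb : dist (gY s) (gY b) = |s - b| := hgY.2.2 s hs b hbT
    have hsble : |s - b| ≤ |a - b| := by
      rcases hord with ⟨h1, h2⟩ | ⟨h1, h2⟩
      · rw [abs_of_nonneg (by linarith), abs_of_nonneg (by linarith)]; linarith
      · rw [abs_of_nonpos (by linarith), abs_of_nonpos (by linarith)]; linarith
    have hfs : dist (f (gY s)) (f (gY b)) ≤ k*(k*(2*D₀+1+c)) + c := by
      have hq := (hqi₁ (gY s) (gY b)).2
      have : dist (gY s) (gY b) ≤ k*(2*D₀+1+c) := by
        rw [hsb]; rw [hYab] at habY; linarith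
      nlinarith
    calc dist (f (gY s)) (G τ) ≤ dist (f (gY s)) (f (gY b)) + dist (f (gY b)) (G τ) :=
          dist_triangle _ _ _
      _ ≤ (k*(k*(2*D₀+1+c)) + c) + (D₀ + 1) := by
          rw [dist_comm (f (gY b)) (G τ)]; linarith
      _ = k*(k*(2*D₀+1+c)) + c + D₀ + 1 := by ring
  rcases le_total a s with has | has
  · -- a ∈ [0,s] : infDist to S₁ ≤ D₀, hence to S₂ as well; pick b ∈ [s,T]
    have h1 : infDist (G τ) S₁ ≤ D₀ := le_trans (infDist_le_dist_of_mem ⟨a, ⟨haT.1, has⟩, rfl⟩) had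
    have h2 : infDist (G τ) S₂ ≤ D₀ := by
      have heq : infDist (G τ) S₁ - infDist (G τ) S₂ = 0 := hFτ
      linarith
    have h3 : infDist (G τ) S₂ < D₀ + 1 := by linarith
    obtain ⟨w, hwS, hw⟩ := (infDist_lt_iff hS₂ne).1 h3
    obtain ⟨b, hb, rfl⟩ := hwS
    exact key b ⟨le_trans hs.1 hb.1, hb.2⟩ (le_of_lt hw) (Or.inr ⟨has, hb.1⟩)
  · have h1 : infDist (G τ) S₂ ≤ D₀ :=
      le_trans (infDist_le_dist_of_mem ⟨a, ⟨has, haT.2⟩, rfl⟩) had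
    have h2 : infDist (G τ) S₁ ≤ D₀ := by
      have heq : infDist (G τ) S₁ - infDist (G τ) S₂ = 0 := hFτ
      linarith
    have h3 : infDist (G τ) S₁ < D₀ + 1 := by linarith
    obtain ⟨w, hwS, hw⟩ := (infDist_lt_iff hS₁ne).1 h3
    obtain ⟨b, hb, rfl⟩ := hwS
    exact key b ⟨hb.1, le_trans hb.2 hs.2⟩ (le_of_lt hw) (Or.inl ⟨hb.2, has⟩)


lemma qi_low {k c dY dX : ℝ} (hk : 1 ≤ k) (h : (1/k)*dY - c ≤ dX) : dY ≤ k*(dX + c) := by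
  have hk0 : (0:ℝ) < k := by linarith
  have h6 := mul_le_mul_of_nonneg_left (show (1/k)*dY ≤ dX + c by linarith) hk0.le
  have h7 : k * ((1/k)*dY) = dY := by field_simp
  rw [h7] at h6
  exact h6


/-- Gromov hyperbolicity (via slim triangles) of geodesic spaces is invariant under
quasi-isometries: if `f : Y → X` is a `(k, c)`-quasi-isometry and `X` is hyperbolic,
then so is `Y`. -/
theorem hyperbolic_of_quasiIsometry {X Y : Type*} [MetricSpace X] [MetricSpace Y]
    (hgX : GeodesicSpace X) (hgY : GeodesicSpace Y)
    (hhypX : ∃ δ : ℝ, 0 ≤ δ ∧ SlimTriangles X δ)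
    (f : Y → X) (k c : ℝ) (hk : 1 ≤ k) (hc : 0 ≤ c)
    (hqi₁ : ∀ y y' : Y, (1 / k) * dist y y' - c ≤ dist (f y) (f y') ∧
      dist (f y) (f y') ≤ k * dist y y' + c)
    (hqi₂ : ∀ x : X, ∃ y : Y, dist x (f y) ≤ c) :
    ∃ δ' : ℝ, 0 ≤ δ' ∧ SlimTriangles Y δ' := by
  obtain ⟨δ, hδ, hslim⟩ := hhypX
  have hk0 : (0:ℝ) < k := by linarith
  obtain ⟨D₀, hD₀0, hdir1⟩ := dir1 hgX hslim hδ f k c hk hc hqi₁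
  have hdir2 := dir2 f k c hk hc hqi₁ D₀ hD₀0 hdir1
  set D₁ : ℝ := k*(k*(2*D₀+1+c)) + c + D₀ + 1 with hD₁
  have hD₁0 : 0 ≤ D₁ := by
    have h1 : (0:ℝ) ≤ 2*D₀+1+c := by linarith
    have h2 : (0:ℝ) ≤ k*(2*D₀+1+c) := mul_nonneg hk0.le h1
    have h3 : (0:ℝ) ≤ k*(k*(2*D₀+1+c)) := mul_nonneg hk0.le h2
    simp only [hD₁]; linarith
  refine ⟨k*(D₁ + δ + D₀ + c), by positivity, ?_⟩
  intro x y z g₁ g₂ g₃ hg₁ hg₂ hg₃ p hp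
  obtain ⟨t, ht, rfl⟩ := hp
  obtain ⟨G₁, hG₁⟩ := hgX (f x) (f y)
  obtain ⟨G₂, hG₂⟩ := hgX (f y) (f z)
  obtain ⟨G₃, hG₃⟩ := hgX (f x) (f z)
  obtain ⟨τ, hτ, hτd⟩ := hdir2 x z g₃ G₃ hg₃ hG₃ t ht
  obtain ⟨q, hq, hqd⟩ := hslim (f x) (f y) (f z) G₁ G₂ G₃ hG₁ hG₂ hG₃ (G₃ τ) ⟨τ, hτ, rfl⟩
  rcases hq with ⟨σ, hσ, rfl⟩ | ⟨σ, hσ, rfl⟩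
  · obtain ⟨a, haI, had⟩ := hdir1 x y g₁ G₁ hg₁ hG₁ σ hσ
    refine ⟨g₁ a, Or.inl ⟨a, haI, rfl⟩, ?_⟩
    have hXd : dist (f (g₃ t)) (f (g₁ a)) ≤ D₁ + δ + D₀ := by
      calc dist (f (g₃ t)) (f (g₁ a))
          ≤ dist (f (g₃ t)) (G₃ τ) + dist (G₃ τ) (G₁ σ) + dist (G₁ σ) (f (g₁ a)) :=
            dist_triangle4 _ _ _ _
        _ ≤ D₁ + δ + D₀ := by
            have := dist_comm (G₃ τ) (G₁ σ)
            linarith [hτd, hqd, had]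
    have := qi_low hk (le_trans (hqi₁ (g₃ t) (g₁ a)).1 hXd)
    linarith
  · obtain ⟨a, haI, had⟩ := hdir1 y z g₂ G₂ hg₂ hG₂ σ hσ
    refine ⟨g₂ a, Or.inr ⟨a, haI, rfl⟩, ?_⟩
    have hXd : dist (f (g₃ t)) (f (g₂ a)) ≤ D₁ + δ + D₀ := by
      calc dist (f (g₃ t)) (f (g₂ a))
          ≤ dist (f (g₃ t)) (G₃ τ) + dist (G₃ τ) (G₂ σ) + dist (G₂ σ) (f (g₂ a)) :=
            dist_triangle4 _ _ _ _
        _ ≤ D₁ + δ + D₀ := by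
            have := dist_comm (G₃ τ) (G₂ σ)
            linarith [hτd, hqd, had]
    have := qi_low hk (le_trans (hqi₁ (g₃ t) (g₂ a)).1 hXd)
    linarith
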